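/- Suppose x ∈ ℤ^{n+1} satisfies xᵀAx = 2 (so x encodes a real root of type A_n^{(1)}), and for some index i one has x_i = 0 and (Ax)_i = −2. Then x + e_i = 𝟙, i.e. the corresponding root α satisfies α + α_i = δ. -/

import Mathlib

/-- Cartan matrix of affine type `A_n^{(1)}`, indexed by `ℤ/(n+1)ℤ`:
`A i i = 2`, `A i j = -1` if `j ≡ i ± 1`, and `0` otherwise. -/
def cartanA (n : ℕ) : Matrix (ZMod (n + 1)) (ZMod (n + 1)) ℤ :=
  Matrix.of fun i j => if i = j then 2 else if j = i + 1 ∨ j = i - 1 then -1 else 0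

/-- Value of the level-`m` weight `m·ω₀ + Σᵢ xᵢ·αᵢ` on the coroot `αⱼ^∨`. -/
def vA (n : ℕ) (m : ℤ) (x : ZMod (n + 1) → ℤ) (j : ZMod (n + 1)) : ℤ :=
  m * (if j = 0 then 1 else 0) + (cartanA n).mulVec x j

/-- Dominance of the coefficient vector `x`. -/
def DomA (n : ℕ) (m : ℤ) (x : ZMod (n + 1) → ℤ) : Prop :=
  ∀ j, 0 ≤ vA n m x j

/-- `y` covers `x` in the componentwise (dominance) order on dominant vectors:
both are dominant, `x < y`, and no dominant `z` lies strictly between them. -/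
def CoversA (n : ℕ) (m : ℤ) (x y : ZMod (n + 1) → ℤ) : Prop :=
  DomA n m x ∧ DomA n m y ∧ x < y ∧ ¬∃ z, DomA n m z ∧ x < z ∧ z < y

/-- The `(n+1)`-cycle graph on `ℤ/(n+1)ℤ` (`j` adjacent to `j ± 1`). -/
def cycleG (n : ℕ) : SimpleGraph (ZMod (n + 1)) :=
  SimpleGraph.fromRel fun i j => j = i + 1

/-- An arc: a nonempty proper subset of `ℤ/(n+1)ℤ` whose induced subgraph in the
`(n+1)`-cycle is connected. -/
def IsArc (n : ℕ) (K : Set (ZMod (n + 1))) : Prop :=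
  K.Nonempty ∧ K ≠ Set.univ ∧ ((cycleG n).induce K).Connected

/-- Indicator vector `χ_K` of a subset `K`, encoding the highest root `α_K`. -/
noncomputable def chi (n : ℕ) (K : Set (ZMod (n + 1))) : ZMod (n + 1) → ℤ :=
  K.indicator 1

/-- The `i`-th standard basis vector, encoding the simple root `αᵢ`. -/
def eA (n : ℕ) (i : ZMod (n + 1)) : ZMod (n + 1) → ℤ :=
  fun j => if j = i then 1 else 0

lemma castne (n : ℕ) (c : ℕ) (hc : 0 < c) (hc2 : c ≤ n) :
    ((c : ZMod (n + 1)) ≠ 0) := by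
  rw [Ne, ZMod.natCast_eq_zero_iff]
  intro h
  have := Nat.le_of_dvd hc h
  omega

lemma mulVec_cartan (n : ℕ) (hn : 2 ≤ n) (x : ZMod (n + 1) → ℤ) (i : ZMod (n + 1)) :
    (cartanA n).mulVec x i = 2 * x i - x (i + 1) - x (i - 1) := by
  have c1 := castne n 1 (by omega) (by omega)
  have c2 := castne n 2 (by omega) (by omega)
  push_cast at c1 c2
  have h1 : i + 1 ≠ i := fun h => c1 (by linear_combination h)
  have h2 : i - 1 ≠ i := fun h => c1 (by linear_combination -h)
  have h3 : i + 1 ≠ i - 1 := fun h => c2 (by linear_combination h)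
  have hmv : (cartanA n).mulVec x i = ∑ j, (cartanA n) i j * x j := rfl
  have hsub : ∑ j, (cartanA n) i j * x j
      = ∑ j ∈ ({i, i + 1, i - 1} : Finset (ZMod (n+1))), (cartanA n) i j * x j := by
    refine (Finset.sum_subset (Finset.subset_univ _) ?_).symm
    intro j _ hj
    simp only [Finset.mem_insert, Finset.mem_singleton, not_or] at hj
    simp [cartanA, Ne.symm hj.1, hj.2.1, hj.2.2]
  rw [hmv, hsub]
  rw [Finset.sum_insert (by simp [Ne.symm h1, Ne.symm h2]),
      Finset.sum_insert (by simp [h3])]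
  simp [cartanA, Ne.symm h1, Ne.symm h2, h3.symm]
  ring


/-- If `xᵀAx = 2` (a real root of type `A_n^{(1)}`), `x_i = 0` and
`(Ax)_i = -2`, then `x + eᵢ = 𝟙`, i.e. `α + αᵢ = δ`. -/
theorem stmt_3 (n : ℕ) (hn : 2 ≤ n) (x : ZMod (n + 1) → ℤ)
    (hx : dotProduct x ((cartanA n).mulVec x) = 2)
    (i : ZMod (n + 1)) (hxi : x i = 0) (hAxi : (cartanA n).mulVec x i = -2) :
    x + eA n i = fun _ => 1 := by
  set d : ZMod (n + 1) → ℤ := fun j => x (j + 1) - x j with hd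
  have hshift : ∀ f : ZMod (n + 1) → ℤ, ∑ j, f (j + 1) = ∑ j, f j := by
    intro f
    exact Fintype.sum_equiv (Equiv.addRight 1) _ _ (fun j => rfl)
  -- sum of squares of differences is 2
  have hdsq : ∑ j, d j ^ 2 = 2 := by
    have hdp : dotProduct x ((cartanA n).mulVec x)
        = ∑ j, x j * (2 * x j - x (j + 1) - x (j - 1)) :=
      Finset.sum_congr rfl fun j _ => by rw [mulVec_cartan n hn x j]
    rw [hdp] at hx
    have h1 := hshift (fun j => x j ^ 2)
    have h2 := hshift (fun j => x j * x (j - 1))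
    simp only [add_sub_cancel_right] at h2
    have step : ∀ j : ZMod (n+1), d j ^ 2 - x j * (2 * x j - x (j + 1) - x (j - 1))
        = (x (j + 1) ^ 2 - x j ^ 2) + (x j * x (j - 1) - x (j + 1) * x j) := by
      intro j; simp only [hd]; ring
    have hsum : ∑ j, (d j ^ 2 - x j * (2 * x j - x (j + 1) - x (j - 1))) = 0 := by
      rw [Finset.sum_congr rfl fun j _ => step j]
      rw [Finset.sum_add_distrib, Finset.sum_sub_distrib, Finset.sum_sub_distrib]
      rw [h1, h2]
      ring
    rw [Finset.sum_sub_distrib] at hsum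
    linarith
  -- every difference is between -1 and 1
  have hbd : ∀ j, d j ^ 2 ≤ 2 := by
    intro j
    rw [← hdsq]
    exact Finset.single_le_sum (f := fun k => d k ^ 2) (fun k _ => sq_nonneg _)
      (Finset.mem_univ j)
  have hbd1 : ∀ j, -1 ≤ d j ∧ d j ≤ 1 := by
    intro j
    have h := hbd j
    constructor <;> nlinarith [sq_nonneg (d j - 1), sq_nonneg (d j + 1)]
  -- from hAxi: x (i+1) + x (i-1) = 2, hence both are 1
  have hiv : x (i + 1) = 1 ∧ x (i - 1) = 1 := by
    rw [mulVec_cartan n hn x i, hxi] at hAxi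
    have e1 : x (i + 1) = d i := by simp [hd, hxi]
    have e2 : x (i - 1) = -d (i - 1) := by simp [hd, hxi, sub_add_cancel]
    have b1 := hbd1 i
    have b2 := hbd1 (i - 1)
    constructor <;> omega
  have hdi : d i = 1 := by have := hiv.1; simp [hd, hxi]; omega
  have hdim : d (i - 1) = -1 := by
    have := hiv.2
    have : x (i - 1 + 1) - x (i - 1) = -1 := by rw [sub_add_cancel, hxi]; omega
    simpa [hd] using this
  have hii : i - 1 ≠ i := by
    have c1 := castne n 1 (by omega) (by omega)
    push_cast at c1
    exact fun h => c1 (by linear_combination -h)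
  -- all other differences vanish
  have hd0 : ∀ j, j ≠ i - 1 → j ≠ i → d j = 0 := by
    intro j hj1 hj2
    have hsub : ∑ k ∈ ({j, i - 1, i} : Finset (ZMod (n+1))), d k ^ 2 ≤ ∑ k, d k ^ 2 :=
      Finset.sum_le_sum_of_subset_of_nonneg (Finset.subset_univ _)
        (fun k _ _ => sq_nonneg _)
    rw [Finset.sum_insert (by simp [hj1, hj2]),
        Finset.sum_insert (by simp [hii]), Finset.sum_singleton, hdi, hdim, hdsq] at hsub
    have : d j ^ 2 ≤ 0 := by linarith
    have := sq_nonneg (d j)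
    nlinarith
  -- walk around the cycle
  have claim : ∀ k : ℕ, k ≤ n - 1 → x (i + 1 + (k : ZMod (n + 1))) = 1 := by
    intro k
    induction k with
    | zero => intro _; simpa using hiv.1
    | succ k ih =>
      intro hk
      have hx1 : x (i + 1 + (k : ZMod (n+1))) = 1 := ih (by omega)
      have hne2 : i + 1 + (k : ZMod (n+1)) ≠ i := by
        intro h
        exact castne n (k + 1) (by omega) (by omega) (by push_cast; linear_combination h)
      have hne1 : i + 1 + (k : ZMod (n+1)) ≠ i - 1 := by
        intro h
        exact castne n (k + 2) (by omega) (by omega) (by push_cast; linear_combination h)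
      have hz := hd0 _ hne1 hne2
      have : x (i + 1 + (k : ZMod (n+1)) + 1) = x (i + 1 + (k : ZMod (n+1))) := by
        simp only [hd] at hz; omega
      rw [show ((k + 1 : ℕ) : ZMod (n+1)) = (k : ZMod (n+1)) + 1 by push_cast; ring,
        ← add_assoc, this, hx1]
  -- conclude
  funext j
  by_cases hji : j = i
  · subst hji
    simp [eA, hxi]
  · have hk : j = i + 1 + ((j - (i + 1)).val : ZMod (n + 1)) := by
      rw [ZMod.natCast_zmod_val]; ring
    have hlt : (j - (i + 1)).val < n + 1 := ZMod.val_lt _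
    have hkn : (j - (i + 1)).val ≤ n - 1 := by
      by_contra h
      have hval : (j - (i + 1)).val = n := by omega
      apply hji
      rw [hk, hval]
      have : ((n : ℕ) : ZMod (n + 1)) = -1 := by
        have : ((n + 1 : ℕ) : ZMod (n + 1)) = 0 := by
          simp [ZMod.natCast_self]
        push_cast at this ⊢
        linear_combination this
      rw [this]; ring
    have := claim _ hkn
    rw [← hk] at this
    simp [eA, hji, this]
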